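/- Let P be a nonempty finite set, w : P → (0,∞), X a set, c : P × X → [0,∞), and ε ∈ (0,1). Assume that every p ∈ P has sensitivity s(p) = 1, i.e., sup over x ∈ X with C(P,w,x) > 0 of w(p)c(p,x)/C(P,w,x) equals 1. Then for every nonempty proper subset Q ⊊ P and every u : Q → (0,∞), the weighted set (Q,u) is not an ε-coreset of (P,w,X,c). -/

import Mathlib

theorem no_small_coreset_of_full_sensitivity
    {α X : Type*} (P : Finset α) (hP : P.Nonempty)
    (w : α → ℝ) (hw : ∀ p ∈ P, 0 < w p)
    (c : α → X → ℝ) (hc : ∀ p x, 0 ≤ c p x)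
    (ε : ℝ) (hε : ε ∈ Set.Ioo (0 : ℝ) 1)
    (hsens : ∀ p ∈ P,
      sSup {r : ℝ | ∃ x : X, 0 < (∑ q ∈ P, w q * c q x) ∧
        r = w p * c p x / ∑ q ∈ P, w q * c q x} = 1)
    (Q : Finset α) (hQne : Q.Nonempty) (hQ : Q ⊂ P)
    (u : α → ℝ) (hu : ∀ q ∈ Q, 0 < u q) :
    ¬ (∀ x : X, |(∑ p ∈ P, w p * c p x) - ∑ q ∈ Q, u q * c q x| ≤
        ε * ∑ p ∈ P, w p * c p x) := by
  classical
  intro h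
  obtain ⟨p, hpP, hpQ⟩ := Finset.exists_of_ssubset hQ
  obtain ⟨hε0, hε1⟩ := hε
  set M := Q.sup' hQne (fun q => u q / w q) with hM
  have hMpos : 0 < M := by
    obtain ⟨q0, hq0⟩ := hQne
    exact lt_of_lt_of_le (div_pos (hu q0 hq0) (hw q0 (hQ.1 hq0)))
      (Finset.le_sup' (fun q => u q / w q) hq0)
  set δ := (1 - ε) / (2 * M) with hδ
  have hδpos : 0 < δ := div_pos (by linarith) (by linarith)
  have hs := hsens p hpP
  set S := {r : ℝ | ∃ x : X, 0 < (∑ q ∈ P, w q * c q x) ∧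
      r = w p * c p x / ∑ q ∈ P, w q * c q x} with hS
  have hSne : S.Nonempty := by
    by_contra hne
    rw [Set.not_nonempty_iff_eq_empty] at hne
    rw [hne, Real.sSup_empty] at hs; norm_num at hs
  have hSbdd : BddAbove S := by
    refine ⟨1, fun r hr => ?_⟩
    obtain ⟨x, hC, hrx⟩ := hr
    rw [hrx, div_le_one hC]
    exact Finset.single_le_sum (fun q hq => mul_nonneg (hw q hq).le (hc q x)) hpP
  have hlt : 1 - δ < sSup S := by rw [hs]; linarith
  obtain ⟨r, hrS, hrgt⟩ := exists_lt_of_lt_csSup hSne hlt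
  obtain ⟨x, hC, hrx⟩ := hrS
  rw [hrx, lt_div_iff₀ hC] at hrgt
  -- rest of P contributes < δ * C
  have herase : ∑ q ∈ P.erase p, w q * c q x = (∑ q ∈ P, w q * c q x) - w p * c p x := by
    rw [Finset.sum_erase_eq_sub hpP]
  have hrest : ∑ q ∈ P.erase p, w q * c q x < δ * ∑ q ∈ P, w q * c q x := by
    rw [herase]; nlinarith
  have hQsub : Q ⊆ P.erase p := fun q hq =>
    Finset.mem_erase.mpr ⟨fun he => hpQ (he ▸ hq), hQ.1 hq⟩
  have h1 : ∑ q ∈ Q, u q * c q x ≤ M * ∑ q ∈ Q, w q * c q x := by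
    rw [Finset.mul_sum]
    refine Finset.sum_le_sum fun q hq => ?_
    have hwq := hw q (hQ.1 hq)
    have : u q ≤ M * w q := by
      have := Finset.le_sup' (fun q => u q / w q) hq
      rw [div_le_iff₀ hwq] at this
      simpa [hM] using this
    calc u q * c q x ≤ (M * w q) * c q x :=
          mul_le_mul_of_nonneg_right this (hc q x)
      _ = M * (w q * c q x) := by ring
  have h2 : ∑ q ∈ Q, w q * c q x ≤ ∑ q ∈ P.erase p, w q * c q x :=
    Finset.sum_le_sum_of_subset_of_nonneg hQsub
      (fun q hq _ => mul_nonneg (hw q (Finset.mem_of_mem_erase hq)).le (hc q x))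
  have hCQ : ∑ q ∈ Q, u q * c q x < M * (δ * ∑ q ∈ P, w q * c q x) := by
    calc ∑ q ∈ Q, u q * c q x ≤ M * ∑ q ∈ Q, w q * c q x := h1
      _ ≤ M * ∑ q ∈ P.erase p, w q * c q x := by nlinarith
      _ < M * (δ * ∑ q ∈ P, w q * c q x) := by nlinarith
  have hMδ : M * δ = (1 - ε) / 2 := by
    rw [hδ]; field_simp
  have hfin := h x
  have habs : (∑ q ∈ P, w q * c q x) - ∑ q ∈ Q, u q * c q x ≤
      ε * ∑ q ∈ P, w q * c q x := le_trans (le_abs_self _) hfin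
  nlinarith
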